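/- Let G be an N-function with derivative g satisfying p⁻ ≤ tg(t)/G(t) ≤ p⁺ on (0,∞), and let Φ(t) := ∫₀ᵗ G⁻¹(G(1)τ^{q*−1})dτ for some q* > 1. Then for all t > 0: g(Φ'(t))·Φ(t) ≤ p⁺·G(1)·t^{q*}. -/
import Mathlib


/-- With `Φ'(t) = G⁻¹(G(1)t^{q*−1})`, one has
`g(Φ'(t))·Φ(t) ≤ p⁺·G(1)·t^{q*}` for all `t > 0`. -/
theorem stmt11 (G g Ginv Φ : ℝ → ℝ) (pm pp qs : ℝ)
    (hpm : 1 < pm) (hpmpp : pm ≤ pp) (hqs : 1 < qs)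
    (hG1 : 0 < G 1)
    (hderiv : ∀ t > 0, HasDerivAt G (g t) t)
    (hbound : ∀ t > 0, pm ≤ t * g t / G t ∧ t * g t / G t ≤ pp)
    (hGinv : ∀ t ≥ 0, Ginv (G t) = t)
    (hGinv' : ∀ s ≥ 0, G (Ginv s) = s ∧ 0 ≤ Ginv s)
    (hΦ : ∀ t, Φ t = ∫ τ in (0:ℝ)..t, Ginv (G 1 * τ ^ (qs - 1))) :
    ∀ t > 0, g (Ginv (G 1 * t ^ (qs - 1))) * Φ t ≤ pp * G 1 * t ^ qs := by
  -- G never vanishes on (0,∞)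
  have hGne : ∀ t > 0, G t ≠ 0 := by
    intro t ht h0
    have hb := (hbound t ht).1
    rw [h0, div_zero] at hb
    linarith
  -- G is positive on (0,∞)
  have hGpos : ∀ t > 0, 0 < G t := by
    intro t ht
    rcases lt_or_gt_of_ne (hGne t ht) with hneg | hpos
    · exfalso
      have hconts : ContinuousOn G (Set.uIcc t 1) := by
        intro x hx
        have hx0 : 0 < x := by
          rcases Set.mem_uIcc.mp hx with ⟨h1, _⟩ | ⟨h1, _⟩
          · exact lt_of_lt_of_le ht h1
          · exact lt_of_lt_of_le one_pos h1
        exact (hderiv x hx0).continuousAt.continuousWithinAt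
      have h0mem : (0:ℝ) ∈ Set.uIcc (G t) (G 1) :=
        Set.mem_uIcc.mpr (Or.inl ⟨hneg.le, hG1.le⟩)
      obtain ⟨c, hc, hGc⟩ := intermediate_value_uIcc hconts h0mem
      have hc0 : 0 < c := by
        rcases Set.mem_uIcc.mp hc with ⟨h1, _⟩ | ⟨h1, _⟩
        · exact lt_of_lt_of_le ht h1
        · exact lt_of_lt_of_le one_pos h1
      exact hGne c hc0 hGc
    · exact hpos
  -- g is positive on (0,∞)
  have hgpos : ∀ t > 0, 0 < g t := by
    intro t ht
    have hb := (hbound t ht).1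
    have h1 : 0 < t * g t / G t := lt_of_lt_of_le (lt_trans one_pos hpm) hb
    have h2 : 0 < t * g t := by
      rcases div_pos_iff.mp h1 with ⟨h, _⟩ | ⟨_, h⟩
      · exact h
      · exact absurd (hGpos t ht) (not_lt.mpr h.le)
    rcases mul_pos_iff.mp h2 with ⟨_, h⟩ | ⟨h, _⟩
    · exact h
    · exact absurd ht (not_lt.mpr h.le)
  -- G is strictly increasing on (0,∞)
  have hmono : ∀ x y : ℝ, 0 < x → x < y → G x < G y := by
    intro x y hx hxy
    have hc : ContinuousOn G (Set.Icc x y) := fun z hz =>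
      ((hderiv z (lt_of_lt_of_le hx hz.1)).continuousAt).continuousWithinAt
    have hd : ∀ z ∈ interior (Set.Icc x y), 0 < deriv G z := by
      intro z hz
      rw [interior_Icc] at hz
      have hz0 : 0 < z := hx.trans hz.1
      rw [(hderiv z hz0).deriv]
      exact hgpos z hz0
    exact strictMonoOn_of_deriv_pos (convex_Icc x y) hc hd
      (Set.left_mem_Icc.mpr hxy.le) (Set.right_mem_Icc.mpr hxy.le) hxy
  -- Ginv 0 = 0
  have hGinv0 : Ginv 0 = 0 := by
    obtain ⟨hG0, hge⟩ := hGinv' 0 le_rfl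
    by_contra hne
    have hpos : 0 < Ginv 0 := lt_of_le_of_ne hge (Ne.symm hne)
    exact absurd hG0 (ne_of_gt (hGpos _ hpos))
  -- Ginv is positive on (0,∞)
  have hGinvpos : ∀ s > 0, 0 < Ginv s := by
    intro s hs
    obtain ⟨hGs, hge⟩ := hGinv' s hs.le
    rcases lt_or_eq_of_le hge with h | h
    · exact h
    · exfalso
      rw [← h] at hGs
      have hG00 : G (Ginv 0) = 0 := (hGinv' 0 le_rfl).1
      rw [hGinv0] at hG00
      rw [hG00] at hGs
      linarith
  -- Ginv is monotone on [0,∞)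
  have hGinvmono : ∀ s1 s2 : ℝ, 0 ≤ s1 → s1 ≤ s2 → Ginv s1 ≤ Ginv s2 := by
    intro s1 s2 hs1 hs12
    by_contra hlt
    push_neg at hlt
    have hs2nn : 0 ≤ s2 := le_trans hs1 hs12
    have h2ge : 0 ≤ Ginv s2 := (hGinv' s2 hs2nn).2
    have h2pos : 0 < Ginv s1 := lt_of_le_of_lt h2ge hlt
    rcases lt_or_eq_of_le h2ge with h | h
    · have := hmono _ _ h hlt
      rw [(hGinv' s2 hs2nn).1, (hGinv' s1 hs1).1] at this
      linarith
    ·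
      have : s2 = 0 := by
        by_contra hne
        have : 0 < s2 := lt_of_le_of_ne hs2nn (Ne.symm hne)
        exact absurd (hGinvpos s2 this) (by rw [← h]; exact lt_irrefl 0)
      have hs10 : s1 = 0 := le_antisymm (this ▸ hs12) hs1
      rw [hs10, hGinv0] at h2pos
      exact lt_irrefl 0 h2pos
  intro t ht
  set M := Ginv (G 1 * t ^ (qs - 1)) with hMdef
  have htpow : 0 < t ^ (qs - 1) := Real.rpow_pos_of_pos ht _
  have hMarg : 0 < G 1 * t ^ (qs - 1) := mul_pos hG1 htpow
  have hM : 0 < M := hGinvpos _ hMarg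
  have hGM : G M = G 1 * t ^ (qs - 1) := (hGinv' _ hMarg.le).1
  -- the integrand is monotone on [0,t]
  have hfm : MonotoneOn (fun τ => Ginv (G 1 * τ ^ (qs - 1))) (Set.Icc 0 t) := by
    intro a ha b hb hab
    apply hGinvmono
    · exact mul_nonneg hG1.le (Real.rpow_nonneg ha.1 _)
    · exact mul_le_mul_of_nonneg_left
        (Real.rpow_le_rpow ha.1 hab (by linarith)) hG1.le
  have hint : IntervalIntegrable (fun τ => Ginv (G 1 * τ ^ (qs - 1)))
      MeasureTheory.volume 0 t := by
    apply MonotoneOn.intervalIntegrable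
    rwa [Set.uIcc_of_le ht.le]
  -- Φ t ≤ t * M
  have hΦle : Φ t ≤ t * M := by
    rw [hΦ t]
    have hle : ∀ x ∈ Set.Icc (0:ℝ) t, Ginv (G 1 * x ^ (qs - 1)) ≤ M := by
      intro x hx
      exact hfm hx (Set.right_mem_Icc.mpr ht.le) hx.2
    calc (∫ τ in (0:ℝ)..t, Ginv (G 1 * τ ^ (qs - 1)))
        ≤ ∫ _ in (0:ℝ)..t, M := by
          apply intervalIntegral.integral_mono_on ht.le hint
            intervalIntegrable_const hle
      _ = t * M := by simp [mul_comm]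
  have hgM : 0 < g M := hgpos M hM
  have hMb : M * g M ≤ pp * G M := by
    have hb := (hbound M hM).2
    exact (div_le_iff₀ (hGpos M hM)).mp hb
  have hΦnn : 0 ≤ Φ t := by
    rw [hΦ t]
    apply intervalIntegral.integral_nonneg ht.le
    intro x hx
    exact (hGinv' _ (mul_nonneg hG1.le (Real.rpow_nonneg hx.1 _))).2
  have hrpow : t ^ (qs - 1) * t = t ^ qs := by
    have := Real.rpow_add ht (qs - 1) 1
    rw [Real.rpow_one] at this
    rw [← this]
    ring_nf
  calc g M * Φ t ≤ g M * (t * M) := by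
        apply mul_le_mul_of_nonneg_left hΦle hgM.le
    _ = t * (M * g M) := by ring
    _ ≤ t * (pp * G M) := by
        apply mul_le_mul_of_nonneg_left hMb ht.le
    _ = pp * G 1 * t ^ qs := by
        rw [hGM, ← hrpow]; ring
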